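/- The inverse R-matrix R̂⁻ of O_q(N) satisfies the index-transposition symmetry Σ_{k,l} R̂⁻{}^{kl}_{ij} C^{ks} C^{lt} = Σ_{k,l} C^{ik} C^{jl} R̂⁻{}^{ts}_{lk} for all i,j,s,t ∈ {1,…,N}. -/

import Mathlib

open Matrix BigOperators

noncomputable section

/-- The standard `O_q(N)` exponents ρ_i; here `i : Fin N` is 0-based, so the
1-based index of the paper is `i.val + 1`. -/
def rho (N : ℕ) (i : Fin N) : ℝ :=
  if 2 * ((i : ℕ) + 1) < N + 1 then (N : ℝ) / 2 - ((i : ℕ) + 1)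
  else if 2 * ((i : ℕ) + 1) = N + 1 then 0
  else (N : ℝ) / 2 - ((i : ℕ) + 1) + 1

/-- The index map i ↦ i' = N+1−i (in 1-based indexing). -/
def pr {N : ℕ} (i : Fin N) : Fin N := i.rev

/-- The metric matrix C with entries C^{ij} = q^{−ρ_i} δ_{i,j'}. -/
def Cmat (q : ℝ) (N : ℕ) : Matrix (Fin N) (Fin N) ℝ :=
  fun i j => if j = pr i then Real.rpow q (-(rho N i)) else 0

/-- The matrix K with entries K^{kl}_{ij} = C^{ij} C_{kl}; the row index is (k,l),
the column index is (i,j), so that matrix multiplication realises the composition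
(K²)^{kl}_{ij} = Σ_{m,n} K^{kl}_{mn} K^{mn}_{ij}. -/
def Kmat (q : ℝ) (N : ℕ) : Matrix (Fin N × Fin N) (Fin N × Fin N) ℝ :=
  fun p r => Cmat q N r.1 r.2 * Cmat q N p.1 p.2

/-- The O_q(N) R-matrix R̂ with entries
R̂^{kl}_{ij} = q^{(k=l)−(k=l')}(i=l)(j=k) + (q−q⁻¹)(i<l)((i=k)(j=l) − K^{kl}_{ij});
row index p = (k,l), column index r = (i,j). -/
def Rhat (q : ℝ) (N : ℕ) : Matrix (Fin N × Fin N) (Fin N × Fin N) ℝ :=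
  fun p r =>
    q ^ (((if p.1 = p.2 then 1 else 0) - (if p.1 = pr p.2 then 1 else 0) : ℤ)) *
      (if r.1 = p.2 then 1 else 0) * (if r.2 = p.1 then 1 else 0)
    + (q - q⁻¹) * (if r.1 < p.2 then 1 else 0) *
      ((if r.1 = p.1 then 1 else 0) * (if r.2 = p.2 then 1 else 0) - Kmat q N p r)

/-- R̂⁻ = R̂ − (q−q⁻¹)·I + (q−q⁻¹)·K. -/
def Rm (q : ℝ) (N : ℕ) : Matrix (Fin N × Fin N) (Fin N × Fin N) ℝ :=
  Rhat q N - (q - q⁻¹) • (1 : Matrix (Fin N × Fin N) (Fin N × Fin N) ℝ)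
    + (q - q⁻¹) • Kmat q N

lemma pr_pr {N : ℕ} (i : Fin N) : pr (pr i) = i := Fin.rev_rev i

lemma pr_eq_iff {N : ℕ} {a b : Fin N} : pr a = b ↔ a = pr b := by
  constructor <;> rintro rfl <;> simp [pr, Fin.rev_rev]

lemma rho_pr (N : ℕ) (i : Fin N) : rho N (pr i) = - rho N i := by
  have hiN : (i : ℕ) < N := i.isLt
  have hv : ((pr i : Fin N) : ℕ) = N - ((i : ℕ) + 1) := Fin.val_rev i
  have hc : (((pr i : Fin N) : ℕ) : ℝ) = (N : ℝ) - ((i : ℕ) + 1) := by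
    rw [hv, Nat.cast_sub (by omega)]; push_cast; ring
  unfold rho
  rcases lt_trichotomy (2 * ((i : ℕ) + 1)) (N + 1) with h | h | h
  · rw [if_pos h, if_neg (by omega), if_neg (by omega), hc]; ring
  · rw [if_neg (by omega), if_pos (by omega), if_neg (by omega), if_pos (by omega)]; ring
  · rw [if_pos (by omega), if_neg (by omega), if_neg (by omega), hc]; ring

lemma Qinv {q : ℝ} (hq : 0 < q) (N : ℕ) (x : Fin N) :
    Real.rpow q (-(rho N (pr x))) = (Real.rpow q (-(rho N x)))⁻¹ := by
  rw [rho_pr, neg_neg]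
  show q ^ (rho N x) = (q ^ (-(rho N x)))⁻¹
  rw [Real.rpow_neg hq.le, inv_inv]

lemma scalar_key (q : ℝ) (hq : 0 < q) (N : ℕ) (i j s t : Fin N) :
    Rm q N (pr s, pr t) (i, j) * Real.rpow q (-(rho N (pr s))) * Real.rpow q (-(rho N (pr t))) =
    Real.rpow q (-(rho N i)) * Real.rpow q (-(rho N j)) * Rm q N (t, s) (pr j, pr i) := by
  have hQ0 : ∀ x : Fin N, Real.rpow q (-(rho N x)) ≠ 0 :=
    fun x => (Real.rpow_pos_of_pos hq _).ne'
  simp only [Rm, Matrix.sub_apply, Matrix.add_apply, Matrix.smul_apply, smul_eq_mul,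
    Matrix.one_apply, Rhat, Kmat, Cmat, pr_pr, Prod.mk.injEq]
  -- E1, E2, E3 pieces
  have E1 : (q ^ (((if pr s = pr t then 1 else 0) - (if pr s = t then 1 else 0) : ℤ)) *
      (if i = pr t then (1:ℝ) else 0) * (if j = pr s then (1:ℝ) else 0)) *
      Real.rpow q (-(rho N (pr s))) * Real.rpow q (-(rho N (pr t))) =
      Real.rpow q (-(rho N i)) * Real.rpow q (-(rho N j)) *
      (q ^ (((if t = s then 1 else 0) - (if t = pr s then 1 else 0) : ℤ)) *
      (if pr j = s then (1:ℝ) else 0) * (if pr i = t then (1:ℝ) else 0)) := by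
    by_cases h3 : i = pr t
    · by_cases h4 : j = pr s
      · subst h3; subst h4
        simp only [pr_pr, if_pos rfl]
        have eps : ((if pr s = pr t then 1 else 0) - (if pr s = t then 1 else 0) : ℤ)
            = ((if t = s then 1 else 0) - (if t = pr s then 1 else 0) : ℤ) := by
          have e1 : (pr s = pr t) ↔ (t = s) := by
            rw [pr, pr, Fin.rev_inj]; exact eq_comm
          have e2 : (pr s = t) ↔ (t = pr s) := eq_comm
          simp only [e1, e2]
        rw [eps]; ring
      · have h4' : ¬ (pr j = s) := fun h => h4 (by rw [← h, pr_pr])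
        simp [h4, h4']
    · have h3' : ¬ (pr i = t) := fun h => h3 (by rw [← h, pr_pr])
      simp [h3, h3']
  have E2 : ((if i < pr t then (1:ℝ) else 0) - 1) *
      ((if i = pr s then (1:ℝ) else 0) * (if j = pr t then (1:ℝ) else 0)) *
      Real.rpow q (-(rho N (pr s))) * Real.rpow q (-(rho N (pr t))) =
      Real.rpow q (-(rho N i)) * Real.rpow q (-(rho N j)) *
      (((if pr j < s then (1:ℝ) else 0) - 1) *
      ((if pr j = t then (1:ℝ) else 0) * (if pr i = s then (1:ℝ) else 0))) := by
    by_cases h1 : i = pr s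
    · by_cases h2 : j = pr t
      · subst h1; subst h2
        simp only [pr_pr, if_pos rfl]
        simp only [show (pr s < pr t) ↔ (t < s) from Fin.rev_lt_rev]
        ring
      · have h2' : ¬ (pr j = t) := fun h => h2 (by rw [← h, pr_pr])
        simp [h2, h2']
    · have h1' : ¬ (pr i = s) := fun h => h1 (by rw [← h, pr_pr])
      simp [h1, h1']
  have E3 : (1 - (if i < pr t then (1:ℝ) else 0)) *
      ((if j = pr i then Real.rpow q (-(rho N i)) else 0) *
       (if pr t = s then Real.rpow q (-(rho N (pr s))) else 0)) *
      Real.rpow q (-(rho N (pr s))) * Real.rpow q (-(rho N (pr t))) =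
      Real.rpow q (-(rho N i)) * Real.rpow q (-(rho N j)) *
      ((1 - (if pr j < s then (1:ℝ) else 0)) *
      ((if pr i = j then Real.rpow q (-(rho N (pr j))) else 0) *
       (if s = pr t then Real.rpow q (-(rho N t)) else 0))) := by
    by_cases h5 : j = pr i
    · by_cases h6 : s = pr t
      · subst h5; subst h6
        simp only [pr_pr, if_pos rfl, Qinv hq]
        field_simp
        rw [mul_div_cancel_right₀ _ (hQ0 t), mul_div_cancel_right₀ _ (hQ0 i)]
      · have h6' : ¬ (pr t = s) := fun h => h6 h.symm
        simp [h6, h6']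
    · have h5' : ¬ (pr i = j) := fun h => h5 h.symm
      simp [h5, h5']
  have And_L : (if pr s = i ∧ pr t = j then (1:ℝ) else 0) =
      (if i = pr s then (1:ℝ) else 0) * (if j = pr t then (1:ℝ) else 0) := by
    by_cases h1 : i = pr s
    · by_cases h2 : j = pr t
      · simp [h1, h2]
      · have h2' : ¬ (pr t = j) := fun h => h2 h.symm
        simp [h2, h2']
    · have h1' : ¬ (pr s = i) := fun h => h1 h.symm
      simp [h1, h1']
  have And_R : (if t = pr j ∧ s = pr i then (1:ℝ) else 0) =
      (if pr j = t then (1:ℝ) else 0) * (if pr i = s then (1:ℝ) else 0) := by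
    by_cases h1 : pr j = t
    · by_cases h2 : pr i = s
      · simp [← h1, ← h2]
      · have h2' : ¬ (s = pr i) := fun h => h2 h.symm
        simp [h2, h2']
    · have h1' : ¬ (t = pr j) := fun h => h1 h.symm
      simp [h1, h1']
  rw [And_L, And_R]
  linear_combination E1 + (q - q⁻¹) * E2 + (q - q⁻¹) * E3


lemma Cmat_eq (q : ℝ) (N : ℕ) (k x : Fin N) :
    Cmat q N k x = if k = pr x then Real.rpow q (-(rho N (pr x))) else 0 := by
  unfold Cmat
  by_cases h : k = pr x
  · rw [if_pos (by rw [h, pr_pr]), if_pos h, h]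
  · rw [if_neg (fun hh => h (by rw [hh, pr_pr])), if_neg h]

theorem Rm_transposition_symmetry (q : ℝ) (hq : 0 < q) (hq1 : q ≠ 1) (N : ℕ)
    (hN : 3 ≤ N) (i j s t : Fin N) :
    ∑ k : Fin N, ∑ l : Fin N, Rm q N (k, l) (i, j) * Cmat q N k s * Cmat q N l t =
    ∑ k : Fin N, ∑ l : Fin N, Cmat q N i k * Cmat q N j l * Rm q N (t, s) (l, k) := by
  have hL : (∑ k : Fin N, ∑ l : Fin N, Rm q N (k, l) (i, j) * Cmat q N k s * Cmat q N l t)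
      = Rm q N (pr s, pr t) (i, j) * Real.rpow q (-(rho N (pr s))) *
        Real.rpow q (-(rho N (pr t))) := by
    simp only [Cmat_eq, mul_ite, mul_zero, ite_mul, zero_mul, Finset.sum_ite_eq',
      Finset.mem_univ, if_true]
  have hR : (∑ k : Fin N, ∑ l : Fin N, Cmat q N i k * Cmat q N j l * Rm q N (t, s) (l, k))
      = Real.rpow q (-(rho N i)) * Real.rpow q (-(rho N j)) * Rm q N (t, s) (pr j, pr i) := by
    simp only [Cmat, mul_ite, mul_zero, ite_mul, zero_mul, Finset.sum_ite_eq',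
      Finset.mem_univ, if_true]
  rw [hL, hR]
  exact scalar_key q hq N i j s t
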